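/- If B₁, ..., B_r are finite-dimensional connected evenly graded commutative K-algebras with Der^{<0}(B_j) = 0 for all j, then Der^{<0}(B₁ ⊗ ⋯ ⊗ B_r) = 0. -/

import Mathlib

open scoped TensorProduct

/-- `θ` is a derivation of the algebra `B`. -/
def IsDeriv {K B : Type*} [CommSemiring K] [CommRing B] [Algebra K B]
    (θ : B →ₗ[K] B) : Prop :=
  ∀ a b : B, θ (a * b) = θ a * b + a * θ b

/-- `θ` is homogeneous of degree `p` with respect to the grading `𝒜`. -/
def HasDegree {K B : Type*} [CommSemiring K] [CommRing B] [Algebra K B]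
    (𝒜 : ℕ → Submodule K B) (θ : B →ₗ[K] B) (p : ℤ) : Prop :=
  ∀ (q : ℕ), ∀ x ∈ 𝒜 q,
    θ x ∈ ⨆ (q' : ℕ) (_ : (q' : ℤ) = (q : ℤ) + p), 𝒜 q'

/-- `Der^{<0}(B) = 0`: every homogeneous derivation of negative degree vanishes. -/
def NegDerVanish {K B : Type*} [CommSemiring K] [CommRing B] [Algebra K B]
    (𝒜 : ℕ → Submodule K B) : Prop :=
  ∀ (θ : B →ₗ[K] B) (p : ℤ), p < 0 → IsDeriv θ → HasDegree 𝒜 θ p → θ = 0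

/-- The natural grading on the `r`-fold tensor product `⨂_j B j`. -/
noncomputable def piTensorGrading {K : Type*} [Field K] {r : ℕ}
    {B : Fin r → Type*} [∀ j, CommRing (B j)] [∀ j, Algebra K (B j)]
    (𝒜 : ∀ j, ℕ → Submodule K (B j)) : ℕ → Submodule K (⨂[K] j, B j) :=
  fun n => ⨆ (d : Fin r → ℕ) (_ : ∑ j, d j = n),
    LinearMap.range (PiTensorProduct.map fun j => ((𝒜 j) (d j)).subtype)

open PiTensorProduct

universe v

set_option linter.unusedSectionVars false
set_option linter.unusedVariables false

section Sep

variable {K : Type*} [Field K]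

/-- The product-of-functionals linear form on a `PiTensorProduct`. -/
noncomputable def prodF {r : ℕ} {M : Fin r → Type v} [∀ i, AddCommGroup (M i)]
    [∀ i, Module K (M i)] (f : ∀ i, M i →ₗ[K] K) : (⨂[K] i, M i) →ₗ[K] K :=
  PiTensorProduct.lift ((MultilinearMap.mkPiAlgebra K (Fin r) K).compLinearMap f)

@[simp] lemma prodF_tprod {r : ℕ} {M : Fin r → Type v} [∀ i, AddCommGroup (M i)]
    [∀ i, Module K (M i)] (f : ∀ i, M i →ₗ[K] K) (x : ∀ i, M i) :
    prodF f (tprod K x) = ∏ i, f i (x i) := by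
  simp [prodF]

/-- Contraction of the 0-th slot against a functional. -/
noncomputable def contr {r : ℕ} {M : Fin (r + 1) → Type v} [∀ i, AddCommGroup (M i)]
    [∀ i, Module K (M i)] (g : M 0 →ₗ[K] K) :
    (⨂[K] i, M i) →ₗ[K] ⨂[K] i : Fin r, M i.succ :=
  PiTensorProduct.lift
  { toFun := fun x => g (x 0) • tprod K (Fin.tail x)
    map_update_add' := by
      intro dec x i a b
      obtain rfl : dec = instDecidableEqFin _ := Subsingleton.elim _ _
      rcases Fin.eq_zero_or_eq_succ i with rfl | ⟨i, rfl⟩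
      · simp [Fin.tail_update_zero, add_smul]
      · simp [Fin.tail_update_succ, Function.update_of_ne (Fin.succ_ne_zero i).symm]
    map_update_smul' := by
      intro dec x i c a
      obtain rfl : dec = instDecidableEqFin _ := Subsingleton.elim _ _
      rcases Fin.eq_zero_or_eq_succ i with rfl | ⟨i, rfl⟩
      · simp [Fin.tail_update_zero, smul_smul]
      · simp only [Fin.tail_update_succ, Function.update_of_ne (Fin.succ_ne_zero i).symm,
          MultilinearMap.map_update_smul]
        rw [smul_comm] }

@[simp] lemma contr_tprod {r : ℕ} {M : Fin (r + 1) → Type v} [∀ i, AddCommGroup (M i)]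
    [∀ i, Module K (M i)] (g : M 0 →ₗ[K] K) (x : ∀ i, M i) :
    contr g (tprod K x) = g (x 0) • tprod K (Fin.tail x) := by
  simp [contr]

/-- Inserting a fixed element in the 0-th slot. -/
noncomputable def consR {r : ℕ} {M : Fin (r + 1) → Type v} [∀ i, AddCommGroup (M i)]
    [∀ i, Module K (M i)] (m : M 0) :
    (⨂[K] i : Fin r, M i.succ) →ₗ[K] ⨂[K] i, M i :=
  PiTensorProduct.lift
  { toFun := fun y => tprod K (Fin.cons m y)
    map_update_add' := by
      intro dec y i a b
      obtain rfl : dec = instDecidableEqFin _ := Subsingleton.elim _ _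
      simp [Fin.cons_update]
    map_update_smul' := by
      intro dec y i c a
      obtain rfl : dec = instDecidableEqFin _ := Subsingleton.elim _ _
      simp [Fin.cons_update] }

@[simp] lemma consR_tprod {r : ℕ} {M : Fin (r + 1) → Type v} [∀ i, AddCommGroup (M i)]
    [∀ i, Module K (M i)] (m : M 0) (y : ∀ i : Fin r, M i.succ) :
    consR m (tprod K y) = tprod K (Fin.cons m y) := by
  simp [consR]

lemma exists_rep {r : ℕ} {M : Fin r → Type v} [∀ i, AddCommGroup (M i)]
    [∀ i, Module K (M i)] (t : ⨂[K] i, M i) :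
    ∃ (n : ℕ) (a : Fin n → K) (x : Fin n → ∀ i, M i),
      t = ∑ k, a k • tprod K (x k) := by
  induction t using PiTensorProduct.induction_on with
  | smul_tprod c f => exact ⟨1, fun _ => c, fun _ => f, by simp⟩
  | add u v hu hv =>
    obtain ⟨n, a, x, rfl⟩ := hu
    obtain ⟨m, b, y, rfl⟩ := hv
    refine ⟨n + m, Fin.append a b, Fin.append x y, ?_⟩
    rw [Fin.sum_univ_add]
    simp

lemma cons_eq_update {n : ℕ} {M : Fin (n + 1) → Type v} (q : ∀ i, M i) (v : M 0) :
    Fin.cons v (Fin.tail q) = Function.update q 0 v := by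
  funext i
  rcases Fin.eq_zero_or_eq_succ i with rfl | ⟨i, rfl⟩
  · simp
  · simp [Fin.tail, Function.update_of_ne (Fin.succ_ne_zero i)]

lemma prodF_comp_contr {r : ℕ} {M : Fin (r + 1) → Type v} [∀ i, AddCommGroup (M i)]
    [∀ i, Module K (M i)] (g : M 0 →ₗ[K] K) (f' : ∀ i : Fin r, M i.succ →ₗ[K] K) :
    (prodF f').comp (contr g) = prodF (Fin.cons (α := fun i => M i →ₗ[K] K) g f') := by
  apply PiTensorProduct.ext
  apply MultilinearMap.ext
  intro x
  simp only [LinearMap.compMultilinearMap_apply, LinearMap.comp_apply, contr_tprod,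
    map_smul, prodF_tprod, Fin.prod_univ_succ, Fin.cons_zero, Fin.cons_succ]
  rfl

lemma sep_aux : ∀ (r : ℕ) (M : Fin r → Type v) (_ : ∀ i, AddCommGroup (M i))
    (_ : ∀ i, Module K (M i)) (t : ⨂[K] i, M i),
    (∀ f : ∀ i, M i →ₗ[K] K, prodF f t = 0) → t = 0 := by
  intro r
  induction r with
  | zero =>
    intro M _ _ t ht
    have h0 := ht (fun i => (i.elim0 : M i →ₗ[K] K))
    have he : prodF (K := K) (fun i : Fin 0 => (i.elim0 : M i →ₗ[K] K)) =
        (PiTensorProduct.isEmptyEquiv (Fin 0)).toLinearMap := by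
      apply PiTensorProduct.ext
      apply MultilinearMap.ext
      intro x
      simp [isEmptyEquiv]
    rw [he] at h0
    exact (LinearEquiv.map_eq_zero_iff _).mp h0
  | succ r IH =>
    intro M _ _ t ht
    have hc : ∀ g : M 0 →ₗ[K] K, contr g t = 0 := by
      intro g
      refine IH (fun i => M i.succ) _ _ _ (fun f' => ?_)
      have := congrArg (fun (L : (⨂[K] i, M i) →ₗ[K] K) => L t) (prodF_comp_contr g f')
      simp only [LinearMap.comp_apply] at this
      rw [this, ht]
    obtain ⟨n, a, x, rfl⟩ := exists_rep t
    classical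
    set t := ∑ k, a k • tprod K (x k) with htdef
    have hWfin : FiniteDimensional K (Submodule.span K (Set.range fun k => x k 0)) :=
      FiniteDimensional.span_of_finite K (Set.finite_range _)
    set W := Submodule.span K (Set.range fun k => x k 0) with hW
    let w : Module.Basis (Fin (Module.finrank K W)) K W := Module.finBasis K W
    have hgex : ∀ l, ∃ g : M 0 →ₗ[K] K, g.comp W.subtype = w.coord l :=
      fun l => LinearMap.exists_extend (w.coord l)
    choose g hg using hgex
    let y : Fin n → W := fun k => ⟨x k 0, Submodule.subset_span (Set.mem_range_self k)⟩
    have hgy : ∀ l k, g l (x k 0) = w.repr (y k) l := by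
      intro l k
      have : g l (W.subtype (y k)) = w.coord l (y k) := by rw [← hg l]; rfl
      simpa [Module.Basis.coord_apply] using this
    -- expand each pure tensor along the basis of W in slot 0
    have hexp : ∀ k, tprod K (x k) =
        ∑ l, w.repr (y k) l • tprod K (Function.update (x k) 0 ((w l : W) : M 0)) := by
      intro k
      have hx0 : x k 0 = ∑ l, w.repr (y k) l • ((w l : W) : M 0) := by
        have := w.sum_repr (y k)
        have := congrArg (W.subtype) this
        rw [map_sum] at this
        simp only [map_smul, Submodule.subtype_apply] at this
        exact this.symm
      conv_lhs => rw [← Function.update_eq_self 0 (x k), hx0]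
      rw [MultilinearMap.map_update_sum]
      congr 1
      funext l
      rw [MultilinearMap.map_update_smul]
    have key : t = ∑ l, consR ((w l : W) : M 0) (contr (g l) t) := by
      rw [htdef]
      simp only [map_sum, map_smul, contr_tprod, consR_tprod]
      rw [Finset.sum_comm]
      congr 1
      funext k
      rw [hexp k, Finset.smul_sum]
      congr 1
      funext l
      rw [cons_eq_update, hgy]
    rw [key]
    simp only [hc, map_zero, Finset.sum_const_zero]

lemma sep {r : ℕ} {M : Fin r → Type v} [∀ i, AddCommGroup (M i)]
    [∀ i, Module K (M i)] (t : ⨂[K] i, M i)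
    (ht : ∀ f : ∀ i, M i →ₗ[K] K, prodF f t = 0) : t = 0 :=
  sep_aux r M _ _ t ht

end Sep

section Graded

variable {K : Type*} [Field K] {r : ℕ} {B : Fin r → Type v}
  [∀ i, CommRing (B i)] [∀ i, Algebra K (B i)]

/-- Inclusion of the `j`-th factor into the tensor product. -/
noncomputable def iotaT (j : Fin r) : B j →ₗ[K] ⨂[K] i, B i :=
  (PiTensorProduct.tprod K).toLinearMap (1 : ∀ i, B i) j

lemma iotaT_apply (j : Fin r) (b : B j) :
    iotaT (K := K) j b = tprod K (Function.update (1 : ∀ i, B i) j b) := by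
  simp [iotaT]

lemma iotaT_mul (j : Fin r) (a b : B j) :
    iotaT (K := K) j (a * b) = iotaT j a * iotaT j b := by
  simp only [iotaT_apply, tprod_mul_tprod]
  congr 1
  funext i
  by_cases h : i = j
  · subst h; simp
  · simp [Function.update_of_ne h]

lemma prod_f_update_self (f : ∀ i, B i →ₗ[K] K) (x : ∀ i, B i) (j : Fin r) (v : B j) :
    ∏ i ∈ Finset.univ.erase j, f i (Function.update x j v i)
      = ∏ i ∈ Finset.univ.erase j, f i (x i) :=
  Finset.prod_congr rfl fun i hi => by
    rw [Function.update_of_ne (Finset.ne_of_mem_erase hi)]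

/-- The multilinear map `x ↦ (∏_{i ≠ j} f i (x i)) • x j`. -/
noncomputable def phiM (f : ∀ i, B i →ₗ[K] K) (j : Fin r) : MultilinearMap K B (B j) where
  toFun x := (∏ i ∈ Finset.univ.erase j, f i (x i)) • x j
  map_update_add' := by
    intro dec x i a b
    obtain rfl : dec = instDecidableEqFin _ := Subsingleton.elim _ _
    by_cases h : i = j
    · subst h
      simp [prod_f_update_self, smul_add]
    · have hmem : i ∈ Finset.univ.erase j := Finset.mem_erase.mpr ⟨h, Finset.mem_univ i⟩
      have hprod : ∀ v : B i, (∏ i' ∈ Finset.univ.erase j, f i' (Function.update x i v i'))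
          = f i v * ∏ i' ∈ (Finset.univ.erase j).erase i, f i' (x i') := by
        intro v
        have h1 : ∀ i' ∈ Finset.univ.erase j, f i' (Function.update x i v i')
            = Function.update (fun i' => f i' (x i')) i (f i v) i' := by
          intro i' _
          by_cases h' : i' = i
          · subst h'; simp
          · simp [Function.update_of_ne h']
        rw [Finset.prod_congr rfl h1, Finset.prod_update_of_mem hmem, ← Finset.erase_eq]
      simp only [hprod, Function.update_of_ne (Ne.symm h), map_add, add_mul, add_smul]
  map_update_smul' := by
    intro dec x i c a
    obtain rfl : dec = instDecidableEqFin _ := Subsingleton.elim _ _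
    by_cases h : i = j
    · subst h
      simp only [prod_f_update_self, Function.update_self]
      rw [smul_comm]
    · have hmem : i ∈ Finset.univ.erase j := Finset.mem_erase.mpr ⟨h, Finset.mem_univ i⟩
      have hprod : ∀ v : B i, (∏ i' ∈ Finset.univ.erase j, f i' (Function.update x i v i'))
          = f i v * ∏ i' ∈ (Finset.univ.erase j).erase i, f i' (x i') := by
        intro v
        have h1 : ∀ i' ∈ Finset.univ.erase j, f i' (Function.update x i v i')
            = Function.update (fun i' => f i' (x i')) i (f i v) i' := by
          intro i' _
          by_cases h' : i' = i
          · subst h'; simp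
          · simp [Function.update_of_ne h']
        rw [Finset.prod_congr rfl h1, Finset.prod_update_of_mem hmem, ← Finset.erase_eq]
      simp only [hprod, Function.update_of_ne (Ne.symm h), map_smul, smul_eq_mul, mul_assoc,
        mul_smul]

/-- Partial contraction `⨂ᵢ Bᵢ → B j` against functionals. -/
noncomputable def phiT (f : ∀ i, B i →ₗ[K] K) (j : Fin r) : (⨂[K] i, B i) →ₗ[K] B j :=
  PiTensorProduct.lift (phiM f j)

@[simp] lemma phiT_tprod (f : ∀ i, B i →ₗ[K] K) (j : Fin r) (x : ∀ i, B i) :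
    phiT f j (tprod K x) = (∏ i ∈ Finset.univ.erase j, f i (x i)) • x j := by
  simp [phiT, phiM]

lemma prodF_eq_phiT (f : ∀ i, B i →ₗ[K] K) (j : Fin r) (t : ⨂[K] i, B i) :
    prodF f t = f j (phiT f j t) := by
  induction t using PiTensorProduct.induction_on with
  | smul_tprod c x =>
    simp only [map_smul, prodF_tprod, phiT_tprod, smul_eq_mul, map_smul]
    rw [← Finset.mul_prod_erase _ _ (Finset.mem_univ j)]
    ring
  | add u v hu hv => simp only [map_add, hu, hv]

lemma phiT_mul_iotaT (f : ∀ i, B i →ₗ[K] K) (j : Fin r) (b : B j) (t : ⨂[K] i, B i) :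
    phiT f j (t * iotaT j b) = phiT f j t * b := by
  induction t using PiTensorProduct.induction_on with
  | smul_tprod c x =>
    have hx : (x * Function.update (1 : ∀ i, B i) j b) = Function.update x j (x j * b) := by
      funext i
      by_cases h : i = j
      · subst h; simp
      · simp [Function.update_of_ne h]
    rw [iotaT_apply, smul_mul_assoc, tprod_mul_tprod, hx, map_smul, map_smul, phiT_tprod,
      phiT_tprod, prod_f_update_self]
    simp [smul_mul_assoc, Function.update_self]
  | add u v hu hv => simp only [add_mul, map_add, hu, hv]

end Graded

section SupDeg

variable {K V : Type*} [Field K] [AddCommGroup V] [Module K V]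

lemma mem_supDeg {P : ℕ → Submodule K V} {s : ℤ} {q₀ : ℕ} (h : (q₀ : ℤ) = s) {x : V}
    (hx : x ∈ P q₀) : x ∈ ⨆ (q' : ℕ) (_ : (q' : ℤ) = s), P q' :=
  Submodule.mem_iSup_of_mem q₀ (Submodule.mem_iSup_of_mem h hx)

lemma supDeg_eq_bot (P : ℕ → Submodule K V) {s : ℤ} (hs : s < 0) :
    (⨆ (q' : ℕ) (_ : (q' : ℤ) = s), P q') = ⊥ :=
  le_bot_iff.mp <| iSup_le fun q' => iSup_le fun h => absurd h (by omega)

lemma supDeg_le (P : ℕ → Submodule K V) {s : ℤ} {q₀ : ℕ} (h : (q₀ : ℤ) = s) :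
    (⨆ (q' : ℕ) (_ : (q' : ℤ) = s), P q') ≤ P q₀ :=
  iSup_le fun q' => iSup_le fun h' => le_of_eq (by congr; omega)

end SupDeg

section GradedB

variable {K : Type*} [Field K] {r : ℕ} {B : Fin r → Type v}
  [∀ i, CommRing (B i)] [∀ i, Algebra K (B i)]
  (𝒜 : ∀ i, ℕ → Submodule K (B i)) [∀ i, GradedAlgebra (𝒜 i)]

lemma iotaT_mem_grading (j : Fin r) (q : ℕ) {b : B j} (hb : b ∈ 𝒜 j q) :
    iotaT (K := K) j b ∈ piTensorGrading 𝒜 q := by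
  classical
  set d : Fin r → ℕ := Function.update (fun _ => 0) j q with hd
  have hsum : ∑ i, d i = q := by
    rw [hd, Finset.sum_update_of_mem (Finset.mem_univ j)]
    simp
  have hmem : ∀ i, Function.update (1 : ∀ i, B i) j b i ∈ 𝒜 i (d i) := by
    intro i
    by_cases h : i = j
    · subst h
      simpa [hd] using hb
    · rw [Function.update_of_ne h, hd, Function.update_of_ne h]
      exact SetLike.one_mem_graded _
  refine Submodule.mem_iSup_of_mem d (Submodule.mem_iSup_of_mem hsum ?_)
  refine ⟨tprod K fun i => (⟨_, hmem i⟩ : 𝒜 i (d i)), ?_⟩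
  rw [PiTensorProduct.map_tprod, iotaT_apply]
  rfl

lemma phiT_grading (f : ∀ i, B i →ₗ[K] K) (j : Fin r) (m : Fin r → ℕ)
    (hf : ∀ i, i ≠ j → ∀ e, e ≠ m i → ∀ x ∈ 𝒜 i e, f i x = 0) (n : ℕ) {t : ⨂[K] i, B i}
    (ht : t ∈ piTensorGrading 𝒜 n) :
    phiT f j t ∈ ⨆ (q' : ℕ)
      (_ : (q' : ℤ) = (n : ℤ) - ∑ i ∈ Finset.univ.erase j, (m i : ℤ)), 𝒜 j q' := by
  classical
  set S := ⨆ (q' : ℕ)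
      (_ : (q' : ℤ) = (n : ℤ) - ∑ i ∈ Finset.univ.erase j, (m i : ℤ)), 𝒜 j q' with hS
  refine (show piTensorGrading 𝒜 n ≤ Submodule.comap (phiT f j) S from ?_) ht
  refine iSup_le fun d => iSup_le fun hd => ?_
  intro t ht'
  obtain ⟨u, rfl⟩ := ht'
  simp only [Submodule.mem_comap]
  induction u using PiTensorProduct.induction_on with
  | smul_tprod c y =>
    rw [map_smul, PiTensorProduct.map_tprod, map_smul, phiT_tprod]
    by_cases hall : ∀ i ∈ Finset.univ.erase j, d i = m i
    · refine Submodule.smul_mem _ _ (Submodule.smul_mem _ _ ?_)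
      have h1 : d j + ∑ i ∈ Finset.univ.erase j, d i = n := by
        rw [Finset.add_sum_erase _ _ (Finset.mem_univ j)]
        exact hd
      have h2 : ∑ i ∈ Finset.univ.erase j, d i = ∑ i ∈ Finset.univ.erase j, m i :=
        Finset.sum_congr rfl hall
      have h3 : ((d j : ℕ) : ℤ)
          = (n : ℤ) - ∑ i ∈ Finset.univ.erase j, (m i : ℤ) := by
        rw [show (∑ i ∈ Finset.univ.erase j, (m i : ℤ))
          = ((∑ i ∈ Finset.univ.erase j, m i : ℕ) : ℤ) from (Nat.cast_sum _ _).symm]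
        omega
      exact mem_supDeg h3 (SetLike.coe_mem (y j))
    · push_neg at hall
      obtain ⟨i0, hi0, hne⟩ := hall
      have h0 : f i0 ((y i0 : B i0)) = 0 :=
        hf i0 (Finset.ne_of_mem_erase hi0) (d i0) hne _ (SetLike.coe_mem (y i0))
      rw [Finset.prod_eq_zero hi0 h0, zero_smul, smul_zero]
      exact zero_mem _
  | add u v hu hv =>
    rw [map_add, map_add]
    exact add_mem hu hv

lemma prodF_decompose (f : ∀ i, B i →ₗ[K] K) (n : ℕ) {t : ⨂[K] i, B i}
    (ht : t ∈ piTensorGrading 𝒜 n) :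
    prodF f t = ∑ d ∈ ((Fintype.piFinset fun _ : Fin r => Finset.range (n + 1)).filter
        fun d => ∑ i, d i = n),
      prodF (fun i => (f i).comp (GradedAlgebra.proj (𝒜 i) (d i))) t := by
  classical
  set D := ((Fintype.piFinset fun _ : Fin r => Finset.range (n + 1)).filter
      fun d => ∑ i, d i = n) with hD
  set L := prodF f - ∑ d ∈ D, prodF (fun i => (f i).comp (GradedAlgebra.proj (𝒜 i) (d i)))
    with hL
  have hker : piTensorGrading 𝒜 n ≤ LinearMap.ker L := by
    refine iSup_le fun d₀ => iSup_le fun hd₀ => ?_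
    intro t ht'
    obtain ⟨u, rfl⟩ := ht'
    rw [LinearMap.mem_ker]
    induction u using PiTensorProduct.induction_on with
    | smul_tprod c y =>
      rw [map_smul, map_smul, smul_eq_zero]
      right
      rw [hL, LinearMap.sub_apply, LinearMap.sum_apply, sub_eq_zero, PiTensorProduct.map_tprod,
        prodF_tprod, eq_comm]
      have hd₀D : d₀ ∈ D := by
        rw [hD, Finset.mem_filter]
        refine ⟨Fintype.mem_piFinset.mpr fun i => Finset.mem_range.mpr ?_, hd₀⟩
        have : d₀ i ≤ n := hd₀ ▸ Finset.single_le_sum (fun _ _ => Nat.zero_le _)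
          (Finset.mem_univ i)
        omega
      refine (Finset.sum_eq_single_of_mem d₀ hd₀D ?_).trans ?_
      · intro d hdD hdne
        obtain ⟨i, hi⟩ := Function.ne_iff.mp hdne
        rw [prodF_tprod]
        refine Finset.prod_eq_zero (Finset.mem_univ i) ?_
        rw [LinearMap.comp_apply, GradedAlgebra.proj_apply, Submodule.subtype_apply,
          DirectSum.decompose_of_mem_ne _ (SetLike.coe_mem (y i)) (Ne.symm hi), map_zero]
      · rw [prodF_tprod]
        refine Finset.prod_congr rfl fun i _ => ?_
        rw [LinearMap.comp_apply, GradedAlgebra.proj_apply, Submodule.subtype_apply,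
          DirectSum.decompose_of_mem_same _ (SetLike.coe_mem (y i))]
    | add u v hu hv =>
      rw [map_add, map_add, hu, hv, add_zero]
  have := hker ht
  rw [LinearMap.mem_ker, hL, LinearMap.sub_apply, LinearMap.sum_apply, sub_eq_zero] at this
  exact this

end GradedB

section Leibniz

variable {K T : Type*} [CommSemiring K] [CommRing T] [Algebra K T]

lemma isDeriv_one {θ : T →ₗ[K] T} (h : IsDeriv θ) : θ 1 = 0 := by
  have h2 : θ 1 = θ 1 + θ 1 := by simpa using h 1 1
  have := add_left_cancel (h2.symm.trans (add_zero (θ 1)).symm)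
  exact this

lemma isDeriv_prod {θ : T →ₗ[K] T} (h : IsDeriv θ) {ι : Type*} [DecidableEq ι]
    (s : Finset ι) (g : ι → T) :
    θ (∏ i ∈ s, g i) = ∑ i ∈ s, (∏ i' ∈ s.erase i, g i') * θ (g i) := by
  induction s using Finset.induction_on with
  | empty => simp [isDeriv_one h]
  | @insert a s ha ih =>
    rw [Finset.prod_insert ha, h (g a) (∏ i ∈ s, g i), ih, Finset.sum_insert ha,
      Finset.erase_insert ha, Finset.mul_sum]
    congr 1
    · rw [mul_comm]
    refine Finset.sum_congr rfl fun i hi => ?_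
    have hia : i ≠ a := fun he => ha (he ▸ hi)
    rw [Finset.erase_insert_of_ne hia.symm, Finset.prod_insert fun hmem => ha
      (Finset.mem_of_mem_erase hmem), mul_assoc]

end Leibniz

section ProdIota

variable {K : Type*} [Field K] {r : ℕ} {B : Fin r → Type v}
  [∀ i, CommRing (B i)] [∀ i, Algebra K (B i)]

lemma prod_tprod (s : Finset (Fin r)) (g : Fin r → ∀ i, B i) :
    ∏ j ∈ s, tprod K (g j) = tprod K (fun i => ∏ j ∈ s, g j i) := by
  induction s using Finset.induction_on with
  | empty =>
    rw [Finset.prod_empty, PiTensorProduct.one_def]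
    exact congrArg _ (funext fun i => (Finset.prod_empty).symm)
  | @insert a s ha ih =>
    rw [Finset.prod_insert ha, ih, tprod_mul_tprod]
    congr 1
    funext i
    simp [Finset.prod_insert ha]

lemma tprod_eq_prod_iotaT (x : ∀ i, B i) :
    tprod K x = ∏ j, iotaT (K := K) j (x j) := by
  simp only [iotaT_apply]
  rw [prod_tprod]
  congr 1
  funext i
  rw [Finset.prod_eq_single i (fun j _ hj => by
      rw [Function.update_of_ne (Ne.symm hj)]; rfl)
    (fun h => absurd (Finset.mem_univ i) h)]
  rw [Function.update_self]

end ProdIota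

/-- If `B₁, …, B_r` are finite-dimensional connected evenly graded commutative
`K`-algebras with `Der^{<0}(B_j) = 0` for all `j`, then
`Der^{<0}(B₁ ⊗ ⋯ ⊗ B_r) = 0`. -/
theorem stmt_4 {K : Type*} [Field K] {r : ℕ}
    {B : Fin r → Type*} [∀ j, CommRing (B j)] [∀ j, Algebra K (B j)]
    (𝒜 : ∀ j, ℕ → Submodule K (B j)) [∀ j, GradedAlgebra (𝒜 j)]
    (hconn : ∀ j, (𝒜 j) 0 = (1 : Submodule K (B j)))
    (heven : ∀ j n, Odd n → (𝒜 j) n = ⊥)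
    [∀ j, FiniteDimensional K (B j)]
    (hneg : ∀ j, NegDerVanish (𝒜 j)) :
    NegDerVanish (piTensorGrading 𝒜) := by
  classical
  intro θ p hp hder hdeg
  have hZh : ∀ (j : Fin r) (q : ℕ) (b : B j), b ∈ 𝒜 j q → θ (iotaT j b) = 0 := by
    intro j q b hb
    have htmem := hdeg q (iotaT j b) (iotaT_mem_grading 𝒜 j q hb)
    by_cases hqp : (q : ℤ) + p < 0
    · rw [supDeg_eq_bot _ hqp] at htmem
      simpa using htmem
    · push_neg at hqp
      set n : ℕ := ((q : ℤ) + p).toNat with hn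
      have hnz : (n : ℤ) = (q : ℤ) + p := Int.toNat_of_nonneg hqp
      have htG : θ (iotaT j b) ∈ piTensorGrading 𝒜 n := supDeg_le _ hnz htmem
      refine sep _ fun f => ?_
      rw [prodF_decompose 𝒜 f n htG]
      refine Finset.sum_eq_zero fun d hd => ?_
      set f' : ∀ i, B i →ₗ[K] K :=
        fun i => (f i).comp (GradedAlgebra.proj (𝒜 i) (d i)) with hf'
      set M : ℤ := ∑ i ∈ Finset.univ.erase j, ((d i : ℕ) : ℤ) with hM
      have hM0 : 0 ≤ M := Finset.sum_nonneg fun i _ => Int.ofNat_nonneg _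
      set D : B j →ₗ[K] B j := (phiT f' j).comp (θ.comp (iotaT j)) with hD
      have hf'hom : ∀ i, i ≠ j → ∀ e, e ≠ d i → ∀ x ∈ 𝒜 i e, f' i x = 0 := by
        intro i _ e he x hx
        rw [hf', LinearMap.comp_apply, GradedAlgebra.proj_apply,
          DirectSum.decompose_of_mem_ne _ hx he, map_zero]
      have hDdeg : HasDegree (𝒜 j) D (p - M) := by
        intro q₀ x hx
        have h1 := hdeg q₀ (iotaT j x) (iotaT_mem_grading 𝒜 j q₀ hx)
        by_cases h2 : (q₀ : ℤ) + p < 0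
        · rw [supDeg_eq_bot _ h2] at h1
          have h3 : θ (iotaT j x) = 0 := by simpa using h1
          have hDx : D x = 0 := by
            rw [hD]
            simp only [LinearMap.comp_apply]
            rw [h3, map_zero]
          rw [hDx]
          exact zero_mem _
        · push_neg at h2
          set n₀ : ℕ := ((q₀ : ℤ) + p).toNat with hn₀
          have hnz₀ : (n₀ : ℤ) = (q₀ : ℤ) + p := Int.toNat_of_nonneg h2
          have hG := supDeg_le _ hnz₀ h1
          have hphi := phiT_grading 𝒜 f' j d hf'hom n₀ hG
          have heq : (n₀ : ℤ) - M = (q₀ : ℤ) + (p - M) := by omega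
          have hDx : D x = phiT f' j (θ (iotaT j x)) := by
            rw [hD]; simp only [LinearMap.comp_apply]
          rw [hDx]
          rwa [heq] at hphi
      have hDder : IsDeriv D := by
        intro a b
        have h4 : θ (iotaT j (a * b)) = θ (iotaT j a) * iotaT j b + iotaT j a * θ (iotaT j b) := by
          rw [iotaT_mul]
          exact hder (iotaT j a) (iotaT j b)
        rw [hD]
        simp only [LinearMap.comp_apply]
        rw [h4, map_add, phiT_mul_iotaT, mul_comm (iotaT (K := K) j a) (θ (iotaT j b)),
          phiT_mul_iotaT]
        ring
      have hD0 : D = 0 := hneg j D (p - M) (by omega) hDder hDdeg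
      rw [prodF_eq_phiT f' j]
      have h5 : phiT f' j (θ (iotaT j b)) = 0 := by
        have h6 := congrArg (fun (L : B j →ₗ[K] B j) => L b) hD0
        simpa [hD, LinearMap.comp_apply] using h6
      rw [h5, map_zero]
  have hZ : ∀ (j : Fin r) (b : B j), θ (iotaT j b) = 0 := by
    intro j b
    have hb := DirectSum.sum_support_decompose (𝒜 j) b
    rw [show b = ∑ q ∈ (DirectSum.decompose (𝒜 j) b).support,
        ((DirectSum.decompose (𝒜 j) b q : 𝒜 j q) : B j) from hb.symm]
    rw [map_sum, map_sum]
    exact Finset.sum_eq_zero fun q _ => hZh j q _ (SetLike.coe_mem _)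
  apply LinearMap.ext
  intro t
  rw [LinearMap.zero_apply]
  have htop : t ∈ Submodule.span K (Set.range (tprod K (s := B))) := by
    rw [PiTensorProduct.span_tprod_eq_top]
    trivial
  refine Submodule.span_induction ?_ ?_ ?_ ?_ htop
  · rintro _ ⟨x, rfl⟩
    rw [tprod_eq_prod_iotaT, isDeriv_prod hder]
    exact Finset.sum_eq_zero fun j _ => by rw [hZ j (x j), mul_zero]
  · exact map_zero θ
  · intro u v _ _ hu hv
    rw [map_add, hu, hv, add_zero]
  · intro a u _ hu
    rw [map_smul, hu, smul_zero]
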